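/- arXiv:1504.07440 — 2 statements merged into one kernel-verified Lean document; each statement's English description precedes it below -/
import Mathlib

section
/- For a positive integer r and an integer η' with 1 ≤ η' ≤ r, the formal power series identity ∑_{σ=0}^∞ ((rσ+η')^σ / σ!) x^{rσ+η'} = z^{η'}/(1 - r z^r) holds, where x = z·e^{-z^r} (i.e., the left side, viewed as a power series in z after substituting x = z e^{-z^r}, equals the right side). -/
open scoped fwdDiff


open PowerSeries

/-- The formal power series `exp(-z^r) = ∑_{k≥0} (-1)^k z^{rk}/k!`. -/
noncomputable def expNegZr (r : ℕ) : PowerSeries ℚ :=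
  PowerSeries.mk fun n => if r ∣ n then (-1 : ℚ)^(n/r) / (n/r).factorial else 0




lemma fwdDiff_iter_zero_fun (k : ℕ) : (Δ_[(1:ℕ)])^[k] (fun _ : ℕ ↦ (0:ℚ)) = fun _ ↦ 0 := by
  induction k with
  | zero => rfl
  | succ k IH => rw [Function.iterate_succ_apply, fwdDiff_const, IH]


lemma fwdDiff_iter_rpoly (r c : ℚ) : ∀ k j : ℕ, j ≤ k →
    (Δ_[(1:ℕ)])^[k] (fun σ : ℕ ↦ (r*σ + c)^j) =
      fun _ ↦ if j = k then (k.factorial : ℚ) * r^k else 0 := by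
  intro k
  induction k with
  | zero =>
    intro j hj
    interval_cases j
    simp
  | succ k IH =>
    intro j hj
    match j with
    | 0 =>
      have h0 : (fun σ : ℕ ↦ (r*σ+c)^0) = fun _ : ℕ ↦ (1:ℚ) := by
        funext σ; simp
      rw [h0, Function.iterate_succ_apply, fwdDiff_const, fwdDiff_iter_zero_fun]
      funext σ
      simp
    | j+1 =>
      have hj' : j ≤ k := by omega
      have step : Δ_[(1:ℕ)] (fun σ : ℕ ↦ (r*σ+c)^(j+1)) =
          (∑ i ∈ Finset.range (j+1),
            (((j+1).choose i : ℚ) * r^(j+1-i)) • fun σ : ℕ ↦ (r*σ+c)^i) := by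
        funext σ
        simp only [fwdDiff, Finset.sum_apply, Pi.smul_apply, smul_eq_mul]
        have e1 : r * ((σ:ℕ)+1 : ℕ) + c = (r*σ+c) + r := by push_cast; ring
        rw [e1, add_pow, Finset.sum_range_succ]
        simp only [Nat.sub_self, pow_zero, Nat.choose_self, Nat.cast_one, mul_one]
        rw [add_sub_cancel_right]
        exact Finset.sum_congr rfl fun i _ ↦ by ring
      rw [Function.iterate_succ_apply, step, fwdDiff_iter_finset_sum]
      have : ∀ i ∈ Finset.range (j+1),
          (Δ_[(1:ℕ)])^[k] ((((j+1).choose i : ℚ) * r^(j+1-i)) • fun σ : ℕ ↦ (r*σ+c)^i) =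
          (((j+1).choose i : ℚ) * r^(j+1-i)) •
            (fun _ : ℕ ↦ if i = k then (k.factorial : ℚ) * r^k else 0) := by
        intro i hi
        rw [fwdDiff_iter_const_smul, IH i (le_trans (Nat.lt_succ_iff.mp (Finset.mem_range.mp hi)) hj')]
      rw [Finset.sum_congr rfl this]
      funext σ
      simp only [Finset.sum_apply, Pi.smul_apply, smul_eq_mul, mul_ite, mul_zero]
      rw [Finset.sum_ite_eq' (Finset.range (j+1)) k]
      by_cases hjk : j = k
      · subst hjk
        simp [Nat.factorial_succ]
        ring
      · have h1 : k ∉ Finset.range (j+1) := by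
          simp only [Finset.mem_range]; omega
        rw [if_neg h1, if_neg (by omega)]

lemma key_sum (r c : ℚ) (k : ℕ) :
    ∑ σ ∈ Finset.range (k+1), ((-1:ℚ)^(k-σ) * (k.choose σ)) * (r*σ+c)^k
      = (k.factorial : ℚ) * r^k := by
  have h := fwdDiff_iter_eq_sum_shift (1:ℕ) (fun σ : ℕ ↦ (r*σ+c)^k) k 0
  rw [fwdDiff_iter_rpoly r c k k le_rfl] at h
  simp only [if_true, smul_eq_mul, mul_one, zero_add, zsmul_eq_mul] at h
  rw [h]
  apply Finset.sum_congr rfl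
  intro σ _
  push_cast
  ring

open PowerSeries

/-- Auxiliary series: `exp(a z^r)` as a formal power series. -/
noncomputable def Ffun (r : ℕ) (a : ℚ) : PowerSeries ℚ :=
  PowerSeries.mk fun n => if r ∣ n then a^(n/r) / ((n/r).factorial : ℚ) else 0

lemma coeff_Ffun (r : ℕ) (a : ℚ) (n : ℕ) :
    PowerSeries.coeff (R := ℚ) n (Ffun r a) = if r ∣ n then a^(n/r) / ((n/r).factorial : ℚ) else 0 :=
  PowerSeries.coeff_mk _ _

lemma Ffun_mul (r : ℕ) (hr : 1 ≤ r) (a b : ℚ) : Ffun r a * Ffun r b = Ffun r (a+b) := by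
  ext n
  rw [PowerSeries.coeff_mul, Finset.Nat.sum_antidiagonal_eq_sum_range_succ_mk]
  simp only [coeff_Ffun]
  by_cases hn : r ∣ n
  · obtain ⟨k, rfl⟩ := hn
    have hinj : Set.InjOn (fun j => r * j) (Finset.range (k+1)) := fun x _ y _ h => by
      simpa [Nat.mul_left_cancel_iff (by omega : 0 < r)] using h
    have himg : (Finset.range (k+1)).image (fun j => r*j) ⊆ Finset.range (r*k+1) := by
      intro i hi
      simp only [Finset.mem_image, Finset.mem_range] at hi ⊢
      obtain ⟨j, hj, rfl⟩ := hi
      exact Nat.lt_succ_of_le (Nat.mul_le_mul_left r (by omega))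
    rw [← Finset.sum_subset himg ?hzero]
    · rw [Finset.sum_image hinj]
      have : ∀ j ∈ Finset.range (k+1),
          (if r ∣ r*j then a^((r*j)/r) / (((r*j)/r).factorial : ℚ) else 0) *
          (if r ∣ (r*k - r*j) then b^((r*k-r*j)/r) / (((r*k-r*j)/r).factorial : ℚ) else 0)
          = a^j/((j.factorial : ℚ)) * (b^(k-j)/(((k-j).factorial : ℚ))) := by
        intro j hj
        have h1 : r*k - r*j = r*(k-j) := by
          have hjk : j ≤ k := Nat.lt_succ_iff.mp (Finset.mem_range.mp hj)
          rw [Nat.mul_sub]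
        rw [if_pos ⟨j, rfl⟩, h1, if_pos ⟨k-j, rfl⟩, Nat.mul_div_cancel_left _ (by omega),
          Nat.mul_div_cancel_left _ (by omega)]
      rw [Finset.sum_congr rfl this, if_pos ⟨k, rfl⟩, Nat.mul_div_cancel_left _ (by omega),
        add_pow, Finset.sum_div]
      apply Finset.sum_congr rfl
      intro j hj
      have hjk : j ≤ k := by simpa using Nat.lt_succ_iff.mp (Finset.mem_range.mp hj)
      rw [Nat.cast_choose ℚ hjk]
      have h2 : ((j.factorial : ℚ)) ≠ 0 := Nat.cast_ne_zero.mpr (Nat.factorial_ne_zero _)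
      have h3 : (((k-j).factorial : ℚ)) ≠ 0 := Nat.cast_ne_zero.mpr (Nat.factorial_ne_zero _)
      have h4 : ((k.factorial : ℚ)) ≠ 0 := Nat.cast_ne_zero.mpr (Nat.factorial_ne_zero _)
      field_simp
    · intro i hi hni
      have : ¬ r ∣ i := by
        rintro ⟨j, rfl⟩
        apply hni
        have h5 : r*j ≤ r*k := by have := Finset.mem_range.mp hi; omega
        have h6 : j ≤ k := Nat.le_of_mul_le_mul_left h5 (by omega)
        exact Finset.mem_image.mpr ⟨j, Finset.mem_range.mpr (by omega), rfl⟩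
      rw [if_neg this, zero_mul]
  · rw [if_neg hn]
    apply Finset.sum_eq_zero
    intro i hi
    by_cases h1 : r ∣ i
    · have h2 : ¬ r ∣ (n - i) := by
        obtain ⟨u, rfl⟩ := h1
        rintro ⟨v, hv⟩
        apply hn
        have h3 : r*u ≤ n := by
          have := Finset.mem_range.mp hi
          omega
        exact ⟨u + v, by rw [Nat.mul_add, ← hv]; omega⟩
      rw [if_neg h2, mul_zero]
    · rw [if_neg h1, zero_mul]

lemma expNegZr_eq (r : ℕ) : expNegZr r = Ffun r (-1) := rfl

lemma Ffun_zero (r : ℕ) (hr : 1 ≤ r) : Ffun r 0 = 1 := by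
  ext n
  rw [coeff_Ffun, PowerSeries.coeff_one]
  rcases Nat.eq_zero_or_pos n with rfl | hn
  · simp
  · rw [if_neg (by omega : ¬ n = 0)]
    by_cases h : r ∣ n
    · rw [if_pos h, zero_pow, zero_div]
      obtain ⟨u, rfl⟩ := h
      have : u ≠ 0 := by rintro rfl; omega
      intro hc
      rw [Nat.mul_div_cancel_left _ (by omega)] at hc
      exact this hc
    · rw [if_neg h]

lemma expNegZr_pow (r : ℕ) (hr : 1 ≤ r) (m : ℕ) :
    (expNegZr r)^m = Ffun r (-(m : ℚ)) := by
  induction m with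
  | zero => simp [Ffun_zero r hr]
  | succ m IH =>
    rw [pow_succ, IH, expNegZr_eq, Ffun_mul r hr]
    push_cast
    ring_nf

lemma geom_inv (r : ℕ) (hr : 1 ≤ r) :
    ((1 : PowerSeries ℚ) - C (R := ℚ) (r:ℚ) * X^r)⁻¹ =
      PowerSeries.mk fun n => if r ∣ n then (r:ℚ)^(n/r) else 0 := by
  have hX : constantCoeff (R := ℚ) ((X : PowerSeries ℚ)^r) = 0 := by
    rw [← PowerSeries.coeff_zero_eq_constantCoeff, PowerSeries.coeff_X_pow, if_neg (by omega)]
  have hconst : constantCoeff (R := ℚ) ((1 : PowerSeries ℚ) - C (R := ℚ) (r:ℚ) * X^r) ≠ 0 := by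
    rw [map_sub, map_mul, hX, map_one, PowerSeries.constantCoeff_C, mul_zero, sub_zero]
    exact one_ne_zero
  symm
  rw [PowerSeries.eq_inv_iff_mul_eq_one hconst]
  ext n
  rw [mul_sub, mul_one, map_sub, mul_left_comm, PowerSeries.coeff_C_mul,
    PowerSeries.coeff_mul_X_pow', PowerSeries.coeff_mk, PowerSeries.coeff_one]
  rcases Nat.eq_zero_or_pos n with rfl | hn
  · rw [if_pos (dvd_zero r), if_neg (by omega), if_pos rfl]
    simp
  · rw [if_neg (by omega : ¬ n = 0)]
    by_cases hd : r ∣ n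
    · obtain ⟨k, rfl⟩ := hd
      have hk : 1 ≤ k := by rcases Nat.eq_zero_or_pos k with rfl | h <;> omega
      rw [if_pos ⟨k, rfl⟩, Nat.mul_div_cancel_left _ (by omega),
        if_pos (by nlinarith : r ≤ r*k), PowerSeries.coeff_mk]
      have h1 : r*k - r = r*(k-1) := by rw [Nat.mul_sub]; omega
      rw [h1, if_pos ⟨k-1, rfl⟩, Nat.mul_div_cancel_left _ (by omega)]
      have : (r:ℚ)^k = (r:ℚ) * (r:ℚ)^(k-1) := by
        rw [← pow_succ']
        congr 1
        omega
      rw [this]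
      ring
    · rw [if_neg hd]
      by_cases hle : r ≤ n
      · rw [if_pos hle, PowerSeries.coeff_mk]
        have : ¬ r ∣ (n - r) := by
          rintro ⟨v, hv⟩
          exact hd ⟨v + 1, by rw [Nat.mul_add, ← hv]; omega⟩
        rw [if_neg this]
        ring
      · rw [if_neg hle]
        ring


/-- For `1 ≤ η' ≤ r`, substituting `x = z·e^{-z^r}` gives the formal power series
identity `∑_{σ≥0} ((rσ+η')^σ/σ!) x^{rσ+η'} = z^{η'}/(1 - r z^r)`, stated
coefficientwise (the sum over `σ` is finite in each coefficient, since the term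
for `σ` has order `> N` once `rσ + η' > N`). -/
theorem stmt_3 (r η' : ℕ) (hr : 1 ≤ r) (h1 : 1 ≤ η') (h2 : η' ≤ r) (N : ℕ) :
    PowerSeries.coeff (R := ℚ) N ((X : PowerSeries ℚ)^η' * (1 - C (R := ℚ) (r : ℚ) * X^r)⁻¹) =
      ∑ σ ∈ Finset.range (N+1),
        (((r*σ+η' : ℕ) : ℚ)^σ / (σ.factorial : ℚ)) *
          PowerSeries.coeff (R := ℚ) N (((X : PowerSeries ℚ) * expNegZr r)^(r*σ+η')) := by
  have hterm : ∀ σ : ℕ, PowerSeries.coeff (R := ℚ) N (((X : PowerSeries ℚ) * expNegZr r)^(r*σ+η')) =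
      if h : r*σ+η' ≤ N ∧ r ∣ (N - (r*σ+η')) then
        (-(((r*σ+η' : ℕ)) : ℚ))^((N - (r*σ+η'))/r) / (((N - (r*σ+η'))/r).factorial : ℚ)
      else 0 := by
    intro σ
    rw [mul_pow, expNegZr_pow r hr, PowerSeries.coeff_X_pow_mul']
    by_cases hle : r*σ+η' ≤ N
    · rw [if_pos hle, coeff_Ffun]
      by_cases hdvd : r ∣ (N - (r*σ+η'))
      · rw [if_pos hdvd, dif_pos ⟨hle, hdvd⟩]
      · rw [if_neg hdvd, dif_neg (by tauto)]
    · rw [if_neg hle, dif_neg (by tauto)]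
  rw [geom_inv r hr, PowerSeries.coeff_X_pow_mul']
  by_cases hmain : η' ≤ N ∧ r ∣ (N - η')
  · obtain ⟨hle, k, hk⟩ := hmain
    have hrk : k ≤ r * k := Nat.le_mul_of_pos_left k (by omega)
    have hkN : k ≤ N := by omega
    rw [if_pos hle, PowerSeries.coeff_mk, if_pos ⟨k, hk⟩, hk,
      Nat.mul_div_cancel_left _ (by omega : 0 < r)]
    rw [← Finset.sum_subset (Finset.range_subset_range.mpr (by omega : k+1 ≤ N+1)) ?hvan]
    case hvan =>
      intro σ hσ hσ'
      have hσk : k + 1 ≤ σ := by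
        simp only [Finset.mem_range, not_lt] at hσ'
        exact hσ'
      have : r*(k+1) ≤ r*σ := Nat.mul_le_mul_left r hσk
      have hgt : ¬ (r*σ+η' ≤ N) := by
        have : r*k + r ≤ r*σ := by rw [← Nat.mul_succ]; exact this
        omega
      rw [hterm σ, dif_neg (by tauto), mul_zero]
    have hstep : ∀ σ ∈ Finset.range (k+1),
        (((r*σ+η' : ℕ) : ℚ)^σ / (σ.factorial : ℚ)) *
          PowerSeries.coeff (R := ℚ) N (((X : PowerSeries ℚ) * expNegZr r)^(r*σ+η')) =
        (((-1:ℚ)^(k-σ) * (k.choose σ)) * ((r:ℚ)*σ+η')^k) / (k.factorial : ℚ) := by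
      intro σ hσ
      have hσk : σ ≤ k := Nat.lt_succ_iff.mp (Finset.mem_range.mp hσ)
      have hrσ : r*σ ≤ r*k := Nat.mul_le_mul_left r hσk
      have hle' : r*σ+η' ≤ N := by omega
      have hsub : N - (r*σ+η') = r*(k-σ) := by rw [Nat.mul_sub]; omega
      rw [hterm σ, dif_pos ⟨hle', by rw [hsub]; exact ⟨k-σ, rfl⟩⟩, hsub,
        Nat.mul_div_cancel_left _ (by omega : 0 < r)]
      have hm : ((r*σ+η' : ℕ) : ℚ) = (r:ℚ)*σ+η' := by push_cast; ring
      rw [hm, Nat.cast_choose ℚ hσk, neg_pow]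
      have hpow : ((r:ℚ)*σ+η')^σ * ((r:ℚ)*σ+η')^(k-σ) = ((r:ℚ)*σ+η')^k := by
        rw [← pow_add]; congr 1; omega
      have f1 : ((σ.factorial : ℚ)) ≠ 0 := Nat.cast_ne_zero.mpr (Nat.factorial_ne_zero _)
      have f2 : (((k-σ).factorial : ℚ)) ≠ 0 := Nat.cast_ne_zero.mpr (Nat.factorial_ne_zero _)
      have f3 : ((k.factorial : ℚ)) ≠ 0 := Nat.cast_ne_zero.mpr (Nat.factorial_ne_zero _)
      field_simp
      rw [← hpow]
    rw [Finset.sum_congr rfl hstep, ← Finset.sum_div, key_sum (r:ℚ) (η':ℚ) k,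
      mul_div_cancel_left₀ _ (Nat.cast_ne_zero.mpr (Nat.factorial_ne_zero k))]
  · have hzero : ∀ σ ∈ Finset.range (N+1),
        (((r*σ+η' : ℕ) : ℚ)^σ / (σ.factorial : ℚ)) *
          PowerSeries.coeff (R := ℚ) N (((X : PowerSeries ℚ) * expNegZr r)^(r*σ+η')) = 0 := by
      intro σ _
      rw [hterm σ, dif_neg ?_, mul_zero]
      rintro ⟨hle, v, hv⟩
      apply hmain
      refine ⟨by omega, ⟨v + σ, ?_⟩⟩
      rw [Nat.mul_add]
      omega
    rw [Finset.sum_eq_zero hzero]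
    by_cases hle : η' ≤ N
    · rw [if_pos hle, PowerSeries.coeff_mk, if_neg (by tauto)]
    · rw [if_neg hle]
end

section
/- The formal power series F(z₁,z₂,u) = S(ruz₂)^{z₂/r} · S(ruz₁)^{z₁/r} / (ζ(uz₂)·ζ(uz₁)) has u-expansion 1/(u²z₁z₂) + (1/(24 z₁z₂))(r z₁³ + r z₂³ - z₁² - z₂²) + O(u²); in particular, the coefficient of u⁰ contains no monomials with positive degree in both z₁ and z₂. -/
open Filter Topology Asymptotics

namespace Stmt12Aux

lemma pow_isBigO_pow {m n : ℕ} (h : n ≤ m) {l : Filter ℂ} (hl : l ≤ 𝓝 0) :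
    (fun w : ℂ => w ^ m) =O[l] fun w => w ^ n := by
  rw [Asymptotics.isBigO_iff]
  refine ⟨1, ?_⟩
  have hev : ∀ᶠ w : ℂ in l, ‖w‖ ≤ 1 := by
    apply hl
    have : Metric.closedBall (0:ℂ) 1 ∈ 𝓝 (0:ℂ) := Metric.closedBall_mem_nhds 0 one_pos
    filter_upwards [this] with w hw
    simpa using hw
  filter_upwards [hev] with w hw
  simp only [norm_pow, one_mul]
  exact pow_le_pow_of_le_one (norm_nonneg w) hw h

lemma exp_taylor5 :
    (fun y : ℂ => Complex.exp y - (1 + y + y^2/2 + y^3/6 + y^4/24)) =O[𝓝 0] fun y => y^5 := by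
  rw [Asymptotics.isBigO_iff]
  refine ⟨(6 : ℝ) * ((120 * 5 : ℝ))⁻¹, ?_⟩
  have hev : ∀ᶠ y : ℂ in 𝓝 0, ‖y‖ ≤ 1 := by
    have : Metric.closedBall (0:ℂ) 1 ∈ 𝓝 (0:ℂ) := Metric.closedBall_mem_nhds 0 one_pos
    filter_upwards [this] with w hw
    simpa using hw
  filter_upwards [hev] with y hy
  have h := Complex.exp_bound (x := y) (by simpa using hy) (n := 5) (by norm_num)
  have hsum : ∑ m ∈ Finset.range 5, y ^ m / (m.factorial : ℂ)
      = 1 + y + y^2/2 + y^3/6 + y^4/24 := by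
    simp [Finset.sum_range_succ, Nat.factorial]
  rw [hsum] at h
  simpa [Nat.factorial, mul_comm] using h

lemma exp_taylor2 :
    (fun y : ℂ => Complex.exp y - (1 + y)) =O[𝓝 0] fun y => y^2 := by
  rw [Asymptotics.isBigO_iff]
  refine ⟨(3 : ℝ) * ((2 * 2 : ℝ))⁻¹, ?_⟩
  have hev : ∀ᶠ y : ℂ in 𝓝 0, ‖y‖ ≤ 1 := by
    have : Metric.closedBall (0:ℂ) 1 ∈ 𝓝 (0:ℂ) := Metric.closedBall_mem_nhds 0 one_pos
    filter_upwards [this] with w hw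
    simpa using hw
  filter_upwards [hev] with y hy
  have h := Complex.exp_bound (x := y) (by simpa using hy) (n := 2) (by norm_num)
  have hsum : ∑ m ∈ Finset.range 2, y ^ m / (m.factorial : ℂ) = 1 + y := by
    simp [Finset.sum_range_succ, Nat.factorial]
  rw [hsum] at h
  simpa [Nat.factorial, mul_comm] using h

lemma log_taylor2 :
    (fun v : ℂ => Complex.log (1 + v) - v) =O[𝓝 0] fun v => v^2 := by
  rw [Asymptotics.isBigO_iff]
  refine ⟨1, ?_⟩
  have hev : ∀ᶠ v : ℂ in 𝓝 0, ‖v‖ ≤ 1/2 := by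
    have : Metric.closedBall (0:ℂ) (1/2) ∈ 𝓝 (0:ℂ) := Metric.closedBall_mem_nhds 0 (by norm_num)
    filter_upwards [this] with w hw
    simpa using hw
  filter_upwards [hev] with v hv
  have h := Complex.norm_log_one_add_sub_self_le (z := v) (lt_of_le_of_lt hv (by norm_num))
  have h2 : (1 - ‖v‖)⁻¹ ≤ 2 := by
    rw [inv_le_comm₀ (by linarith) (by norm_num)]
    linarith
  calc ‖Complex.log (1 + v) - v‖ ≤ ‖v‖^2 * (1 - ‖v‖)⁻¹ / 2 := h
    _ ≤ ‖v‖^2 * 2 / 2 := by gcongr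
    _ = 1 * ‖v^2‖ := by rw [norm_pow]; ring

lemma zeta_taylor :
    (fun w : ℂ => (Complex.exp (w/2) - Complex.exp (-w/2)) - (w + w^3/24))
      =O[𝓝 0] fun w => w^5 := by
  have h1 : Tendsto (fun w : ℂ => w/2) (𝓝 0) (𝓝 0) := by
    simpa using (tendsto_id (α := ℂ) (x := 𝓝 0)).div_const 2
  have h2 : Tendsto (fun w : ℂ => -w/2) (𝓝 0) (𝓝 0) := by
    simpa using (tendsto_id (α := ℂ) (x := 𝓝 0)).neg.div_const 2
  have ha := exp_taylor5.comp_tendsto h1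
  have hb := exp_taylor5.comp_tendsto h2
  have hd : (fun w : ℂ => (w/2)^5) =O[𝓝 0] fun w => w^5 := by
    have e : (fun w : ℂ => (w/2)^5) = fun w => ((1:ℂ)/2)^5 * w^5 := by funext w; ring
    rw [e]; exact isBigO_const_mul_self _ _ _
  have hd' : (fun w : ℂ => (-w/2)^5) =O[𝓝 0] fun w => w^5 := by
    have e : (fun w : ℂ => (-w/2)^5) = fun w => (-(1:ℂ)/2)^5 * w^5 := by funext w; ring
    rw [e]; exact isBigO_const_mul_self _ _ _
  have hc := (ha.trans hd).sub (hb.trans hd')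
  refine hc.congr_left fun w => ?_
  simp only [Function.comp]
  ring

lemma S_taylor :
    (fun w : ℂ => (Complex.exp (w/2) - Complex.exp (-w/2))/w - (1 + w^2/24))
      =O[𝓝[≠] (0:ℂ)] fun w => w^4 := by
  have h := (zeta_taylor.mono nhdsWithin_le_nhds).mul
    (isBigO_refl (fun w : ℂ => w⁻¹) (𝓝[≠] (0:ℂ)))
  refine h.congr' ?_ ?_
  · filter_upwards [self_mem_nhdsWithin] with w hw
    have hw' : (w:ℂ) ≠ 0 := hw
    field_simp
  · filter_upwards [self_mem_nhdsWithin] with w hw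
    have hw' : (w:ℂ) ≠ 0 := hw
    field_simp

noncomputable def Sa (w : ℂ) : ℂ := (Complex.exp (w/2) - Complex.exp (-w/2)) / w

lemma Sm1_isBigO : (fun w : ℂ => Sa w - 1) =O[𝓝[≠] (0:ℂ)] fun w => w^2 := by
  have h1 : (fun w : ℂ => w^2/24) =O[𝓝[≠] (0:ℂ)] fun w => w^2 := by
    have e : (fun w : ℂ => w^2/24) = fun w => ((1:ℂ)/24) * w^2 := by funext w; ring
    rw [e]; exact isBigO_const_mul_self _ _ _
  have h2 := (S_taylor.trans (pow_isBigO_pow (by norm_num) nhdsWithin_le_nhds)).add h1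
  refine h2.congr_left fun w => ?_
  simp only [Sa]; ring

lemma Sm1_tendsto : Tendsto (fun w : ℂ => Sa w - 1) (𝓝[≠] (0:ℂ)) (𝓝 0) := by
  refine Sm1_isBigO.trans_tendsto ?_
  have := (continuous_pow 2).tendsto (0 : ℂ)
  simpa using this.mono_left nhdsWithin_le_nhds

lemma Sa_tendsto : Tendsto Sa (𝓝[≠] (0:ℂ)) (𝓝 1) := by
  have := Sm1_tendsto.add_const 1
  simpa using this

lemma L_taylor :
    (fun w : ℂ => Complex.log (Sa w) - w^2/24) =O[𝓝[≠] (0:ℂ)] fun w => w^4 := by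
  have hlog := log_taylor2.comp_tendsto Sm1_tendsto
  have hsq : (fun w : ℂ => (Sa w - 1)^2) =O[𝓝[≠] (0:ℂ)] fun w => w^4 := by
    have := Sm1_isBigO.mul Sm1_isBigO
    exact this.congr (fun w => by ring) (fun w => by ring)
  have h1 : (fun w : ℂ => Complex.log (Sa w) - (Sa w - 1)) =O[𝓝[≠] (0:ℂ)] fun w => w^4 := by
    refine (hlog.trans hsq).congr_left fun w => ?_
    simp only [Function.comp]
    congr 2
    ring
  have h2 := h1.add S_taylor
  refine h2.congr_left fun w => ?_
  simp only [Sa]; ring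

end Stmt12Aux

/-- The function `F(z₁,z₂,u) = S(ruz₂)^{z₂/r}·S(ruz₁)^{z₁/r}/(ζ(uz₂)ζ(uz₁))` has
`u`-expansion `1/(u²z₁z₂) + (1/(24z₁z₂))(rz₁³ + rz₂³ - z₁² - z₂²) + O(u²)`; in
particular, the `u⁰`-coefficient contains no monomials with positive degree in
both `z₁` and `z₂` (it is of the form `p(z₁)/z₂ + q(z₂)/z₁`). -/
theorem stmt_12 (r : ℕ) (hr : 1 ≤ r) (z₁ z₂ : ℂ) (h₁ : z₁ ≠ 0) (h₂ : z₂ ≠ 0) :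
    let zeta : ℂ → ℂ := fun w => Complex.exp (w/2) - Complex.exp (-w/2)
    let S : ℂ → ℂ := fun w => zeta w / w
    let F : ℂ → ℂ := fun u =>
      S ((r : ℂ)*u*z₂) ^ (z₂/(r : ℂ)) * S ((r : ℂ)*u*z₁) ^ (z₁/(r : ℂ))
        / (zeta (u*z₂) * zeta (u*z₁))
    ((fun u : ℂ => F u - (1/(u^2*z₁*z₂)
          + ((r : ℂ)*z₁^3 + (r : ℂ)*z₂^3 - z₁^2 - z₂^2)/(24*z₁*z₂)))
        =O[𝓝[≠] (0 : ℂ)] fun u => u^2)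
    ∧ ∃ p q : Polynomial ℂ,
        ((r : ℂ)*z₁^3 + (r : ℂ)*z₂^3 - z₁^2 - z₂^2)/(24*z₁*z₂)
          = Polynomial.eval z₁ p / z₂ + Polynomial.eval z₂ q / z₁ := by
  intro zeta S F
  have hrC : ((r:ℕ):ℂ) ≠ 0 := Nat.cast_ne_zero.mpr (by omega)
  constructor
  · have hu0 : ∀ᶠ u : ℂ in 𝓝[≠] (0:ℂ), u ≠ 0 := self_mem_nhdsWithin
    have hmul : ∀ a : ℂ, a ≠ 0 →
        Tendsto (fun u : ℂ => a*u) (𝓝[≠] (0:ℂ)) (𝓝[≠] (0:ℂ)) := by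
      intro a ha
      rw [tendsto_nhdsWithin_iff]
      constructor
      · have h : Tendsto (fun u : ℂ => a*u) (𝓝 0) (𝓝 (a*0)) :=
          (continuous_const.mul continuous_id).tendsto 0
        simpa using h.mono_left nhdsWithin_le_nhds
      · filter_upwards [hu0] with u hu
        simpa using mul_ne_zero ha hu
    have hLa : ∀ (a : ℂ), a ≠ 0 → ∀ (f : ℂ → ℂ), (∀ u, f u = a * u) →
        (fun u => Complex.log (Stmt12Aux.Sa (f u)) - (f u)^2/24)
          =O[𝓝[≠] (0:ℂ)] fun u => u^4 := by
      intro a ha f hf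
      have h := Stmt12Aux.L_taylor.comp_tendsto (hmul a ha)
      have h2 : (fun u : ℂ => (a*u)^4) =O[𝓝[≠] (0:ℂ)] fun u => u^4 := by
        have e : (fun u : ℂ => (a*u)^4) = fun u => a^4 * u^4 := by funext u; ring
        rw [e]; exact isBigO_const_mul_self _ _ _
      refine (h.trans h2).congr_left fun u => ?_
      simp only [Function.comp, hf u]
    have hne : ∀ (a : ℂ), a ≠ 0 → ∀ (f : ℂ → ℂ), (∀ u, f u = a * u) →
        ∀ᶠ u in 𝓝[≠] (0:ℂ), Stmt12Aux.Sa (f u) ≠ 0 := by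
      intro a ha f hf
      have h := (Stmt12Aux.Sa_tendsto.comp (hmul a ha)).eventually_ne one_ne_zero
      filter_upwards [h] with u hu
      rw [hf u]; exact hu
    set c : ℂ := ((r:ℂ)*z₁^3 + (r:ℂ)*z₂^3 - z₁^2 - z₂^2)/24 with hc
    set g : ℂ → ℂ := fun u =>
      Complex.log (Stmt12Aux.Sa ((r:ℂ)*u*z₂)) * (z₂/(r:ℂ))
      + Complex.log (Stmt12Aux.Sa ((r:ℂ)*u*z₁)) * (z₁/(r:ℂ))
      - Complex.log (Stmt12Aux.Sa (u*z₁)) - Complex.log (Stmt12Aux.Sa (u*z₂)) with hgdef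
    have hA := hLa ((r:ℂ)*z₂) (mul_ne_zero hrC h₂) (fun u => (r:ℂ)*u*z₂) (fun u => by ring)
    have hB := hLa ((r:ℂ)*z₁) (mul_ne_zero hrC h₁) (fun u => (r:ℂ)*u*z₁) (fun u => by ring)
    have hC1 := hLa z₁ h₁ (fun u => u*z₁) (fun u => by ring)
    have hC2 := hLa z₂ h₂ (fun u => u*z₂) (fun u => by ring)
    have hg : (fun u => g u - c * u^2) =O[𝓝[≠] (0:ℂ)] fun u => u^4 := by
      have h := ((((hA.const_mul_left (z₂/(r:ℂ))).add
        (hB.const_mul_left (z₁/(r:ℂ)))).sub hC1).sub hC2)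
      refine h.congr_left fun u => ?_
      simp only [hgdef, hc]
      field_simp
      ring
    have hu24 : (fun u : ℂ => u^4) =O[𝓝[≠] (0:ℂ)] fun u => u^2 :=
      Stmt12Aux.pow_isBigO_pow (by norm_num) nhdsWithin_le_nhds
    have hg2 : g =O[𝓝[≠] (0:ℂ)] fun u => u^2 := by
      have hcu : (fun u : ℂ => c*u^2) =O[𝓝[≠] (0:ℂ)] fun u => u^2 :=
        isBigO_const_mul_self _ _ _
      refine ((hg.trans hu24).add hcu).congr_left fun u => by ring
    have htg : Tendsto g (𝓝[≠] (0:ℂ)) (𝓝 0) := by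
      refine hg2.trans_tendsto ?_
      have h := (continuous_pow 2).tendsto (0:ℂ)
      simpa using h.mono_left nhdsWithin_le_nhds
    have hexp : (fun u => Complex.exp (g u) - (1 + g u)) =O[𝓝[≠] (0:ℂ)] fun u => u^4 := by
      have h := Stmt12Aux.exp_taylor2.comp_tendsto htg
      have h2 : (fun u => (g u)^2) =O[𝓝[≠] (0:ℂ)] fun u => u^4 := by
        have h3 := hg2.mul hg2
        exact h3.congr (fun u => by ring) (fun u => by ring)
      exact (h.trans h2).congr_left fun u => rfl
    have hE : (fun u => Complex.exp (g u) - (1 + c*u^2)) =O[𝓝[≠] (0:ℂ)] fun u => u^4 :=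
      (hexp.add hg).congr_left fun u => by ring
    have hinv : (fun u : ℂ => (u^2*z₁*z₂)⁻¹) =O[𝓝[≠] (0:ℂ)] fun u => (u^2)⁻¹ := by
      have e : (fun u : ℂ => (u^2*z₁*z₂)⁻¹) = fun u => (z₁*z₂)⁻¹ * (u^2)⁻¹ := by
        funext u; rw [mul_inv, mul_inv]; ring
      rw [e]; exact isBigO_const_mul_self _ _ _
    have hmain : (fun u => (Complex.exp (g u) - (1 + c*u^2)) / (u^2*z₁*z₂))
        =O[𝓝[≠] (0:ℂ)] fun u => u^2 := by
      have h := hE.mul hinv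
      refine h.congr' (Filter.Eventually.of_forall fun u => (div_eq_mul_inv _ _).symm) ?_
      filter_upwards [hu0] with u hu
      field_simp
    have hS : S = Stmt12Aux.Sa := rfl
    have heq : (fun u : ℂ => F u - (1/(u^2*z₁*z₂)
          + ((r : ℂ)*z₁^3 + (r : ℂ)*z₂^3 - z₁^2 - z₂^2)/(24*z₁*z₂)))
        =ᶠ[𝓝[≠] (0:ℂ)]
        fun u => (Complex.exp (g u) - (1 + c*u^2)) / (u^2*z₁*z₂) := by
      filter_upwards [hu0,
        hne ((r:ℂ)*z₂) (mul_ne_zero hrC h₂) (fun u => (r:ℂ)*u*z₂) (fun u => by ring),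
        hne ((r:ℂ)*z₁) (mul_ne_zero hrC h₁) (fun u => (r:ℂ)*u*z₁) (fun u => by ring),
        hne z₁ h₁ (fun u => u*z₁) (fun u => by ring),
        hne z₂ h₂ (fun u => u*z₂) (fun u => by ring)] with u hu hn1 hn2 hn3 hn4
      have hz2 : zeta (u*z₂) = (u*z₂) * Stmt12Aux.Sa (u*z₂) := by
        have e : Stmt12Aux.Sa (u*z₂) = zeta (u*z₂) / (u*z₂) := rfl
        rw [e]
        field_simp
      have hz1 : zeta (u*z₁) = (u*z₁) * Stmt12Aux.Sa (u*z₁) := by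
        have e : Stmt12Aux.Sa (u*z₁) = zeta (u*z₁) / (u*z₁) := rfl
        rw [e]
        field_simp
      have hgexp : Complex.exp (g u)
          = Complex.exp (Complex.log (Stmt12Aux.Sa ((r:ℂ)*u*z₂)) * (z₂/(r:ℂ)))
            * Complex.exp (Complex.log (Stmt12Aux.Sa ((r:ℂ)*u*z₁)) * (z₁/(r:ℂ)))
            / (Stmt12Aux.Sa (u*z₁) * Stmt12Aux.Sa (u*z₂)) := by
        rw [show g u = Complex.log (Stmt12Aux.Sa ((r:ℂ)*u*z₂)) * (z₂/(r:ℂ))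
            + Complex.log (Stmt12Aux.Sa ((r:ℂ)*u*z₁)) * (z₁/(r:ℂ))
            - (Complex.log (Stmt12Aux.Sa (u*z₁)) + Complex.log (Stmt12Aux.Sa (u*z₂)))
          from by simp only [hgdef]; ring]
        rw [Complex.exp_sub, Complex.exp_add, Complex.exp_add,
          Complex.exp_log hn3, Complex.exp_log hn4]
      have hu2 : u^2 ≠ 0 := pow_ne_zero 2 hu
      simp only [F, hS]
      rw [hz1, hz2, Complex.cpow_def_of_ne_zero hn1, Complex.cpow_def_of_ne_zero hn2, hgexp]
      rw [show (u*z₂ * Stmt12Aux.Sa (u*z₂)) * (u*z₁ * Stmt12Aux.Sa (u*z₁))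
          = (Stmt12Aux.Sa (u*z₁) * Stmt12Aux.Sa (u*z₂)) * (u^2*z₁*z₂) from by ring]
      rw [← div_div]
      rw [show 1/(u^2*z₁*z₂) + ((r:ℂ)*z₁^3 + (r:ℂ)*z₂^3 - z₁^2 - z₂^2)/(24*z₁*z₂)
          = (1 + c*u^2)/(u^2*z₁*z₂) from by rw [hc]; field_simp]
      rw [div_sub_div_same]
    exact hmain.congr' heq.symm (Filter.EventuallyEq.refl _ _)
  · refine ⟨Polynomial.C ((r:ℂ)/24) * Polynomial.X^2 - Polynomial.C (1/24) * Polynomial.X,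
      Polynomial.C ((r:ℂ)/24) * Polynomial.X^2 - Polynomial.C (1/24) * Polynomial.X, ?_⟩
    simp only [Polynomial.eval_sub, Polynomial.eval_mul, Polynomial.eval_pow,
      Polynomial.eval_C, Polynomial.eval_X]
    field_simp
    ring
end
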